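/- Consider a tree-indexed Markov chain on two states with transition matrix P = [[p, 1−p],[1−q, q]], second eigenvalue λ_2 = p + q − 1, and feature values y_1, y_2. Order the nodes of the m-tree level by level and define M_n = Σ_{k=1}^n [y(X_k) − λ_2 y(X_{p(k)})] − n(1−λ_2)E_π(y), where p(k) is the parent of node k. Then M_n is a martingale with respect to F_n = σ(X_1,...,X_n), for any initial distribution of the root. -/

import Mathlib

open MeasureTheory BigOperators Filter

/-- For the tree-indexed Markov chain on two states with
transition matrix [[p,1−p],[1−q,q]], second eigenvalue λ₂ = p+q−1 and feature
y, with the nodes of the m-tree ordered level by level (node 1 the root, parent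
map pa k = (k−2)/m + 1), the process
M_n = Σ_{k=1}^n [y(X_k) − λ₂ y(X_{pa(k)})] − n(1−λ₂)E_π(y)
is a martingale with respect to F_n = σ(X_1,…,X_n) (n ≥ 1), for any initial
distribution of the root. -/
theorem two_state_tree_gls_martingale
    {Ω : Type*} {m0 : MeasurableSpace Ω} (μ : Measure Ω) [IsProbabilityMeasure μ]
    (m : ℕ) (hm : 1 ≤ m)
    (p q : ℝ) (hp0 : 0 ≤ p) (hp1 : p ≤ 1) (hq0 : 0 ≤ q) (hq1 : q ≤ 1)
    (hpq : p + q < 2)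
    (y : Fin 2 → ℝ)
    (Pmat : Matrix (Fin 2) (Fin 2) ℝ)
    (hPmat : Pmat = Matrix.of ![![p, 1 - p], ![1 - q, q]])
    (X : ℕ → Ω → Fin 2)
    (pa : ℕ → ℕ) (hpa1 : pa 1 = 1)
    (hpa : ∀ k, 2 ≤ k → pa k = (k - 2) / m + 1)
    (F : Filtration ℕ m0)
    (hadapted : ∀ n : ℕ, Measurable[F n] (X (n + 1)))
    (hMarkov : ∀ (k : ℕ) (g : Fin 2 → ℝ),
      μ[(fun ω => g (X (k + 2) ω)) | F k] =ᵐ[μ]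
        fun ω => ∑ j, Pmat (X (pa (k + 2)) ω) j * g j) :
    Martingale
      (fun (n : ℕ) (ω : Ω) =>
        (∑ k ∈ Finset.Icc 1 (n + 1), (y (X k ω) - (p + q - 1) * y (X (pa k) ω)))
          - (n + 1 : ℝ) * (1 - (p + q - 1)) *
              (((1 - q) * y 0 + (1 - p) * y 1) / (2 - p - q)))
      F μ := by
  set c : ℝ := ((1 - q) * y 0 + (1 - p) * y 1) / (2 - p - q) with hc
  have hyMeas : Measurable y := measurable_of_countable y
  -- X k is F n measurable for 1 ≤ k ≤ n+1
  have hXmeas : ∀ n k : ℕ, 1 ≤ k → k ≤ n + 1 → Measurable[F n] (X k) := by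
    intro n k hk1 hk2
    obtain ⟨j, rfl⟩ : ∃ j, k = j + 1 := ⟨k - 1, by omega⟩
    exact (hadapted j).mono (F.mono (by omega)) le_rfl
  -- pa k bounds
  have hpaLe : ∀ k, 1 ≤ k → 1 ≤ pa k ∧ pa k ≤ k := by
    intro k hk
    rcases eq_or_lt_of_le hk with h | h
    · simp [← h, hpa1]
    · have h2 : 2 ≤ k := h
      rw [hpa k h2]
      refine ⟨Nat.le_add_left 1 _, ?_⟩
      calc (k - 2) / m + 1 ≤ (k - 2) + 1 := Nat.add_le_add_right (Nat.div_le_self _ _) 1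
        _ ≤ k := by omega
  -- integrability of y ∘ Z for measurable Z
  have hyint : ∀ (Z : Ω → Fin 2), Measurable Z → Integrable (fun ω => y (Z ω)) μ := by
    intro Z hZ
    refine Integrable.mono' (integrable_const (max ‖y 0‖ ‖y 1‖))
      ((hyMeas.comp hZ).aestronglyMeasurable) ?_
    filter_upwards with ω
    generalize Z ω = i
    fin_cases i
    · exact le_max_left _ _
    · exact le_max_right _ _
  have hne : (2 - p - q) ≠ 0 := by linarith
  have hkey : ∀ i : Fin 2, (∑ j, Pmat i j * y j) = (p + q - 1) * y i + (1 - (p + q - 1)) * c := by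
    intro i
    fin_cases i <;>
      · simp only [hPmat, Fin.sum_univ_two, hc, Matrix.of_apply, Matrix.cons_val_zero,
          Matrix.cons_val_one, Matrix.head_cons, Fin.zero_eta, Fin.mk_one]
        field_simp
        ring
  have hadp : StronglyAdapted F (fun (n : ℕ) (ω : Ω) =>
      (∑ k ∈ Finset.Icc 1 (n + 1), (y (X k ω) - (p + q - 1) * y (X (pa k) ω)))
        - (n + 1 : ℝ) * (1 - (p + q - 1)) * c) := by
    intro n
    refine Measurable.stronglyMeasurable (Measurable.sub ?_ measurable_const)
    refine Finset.measurable_sum _ ?_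
    intro k hk
    simp only [Finset.mem_Icc] at hk
    exact (hyMeas.comp (hXmeas n k hk.1 hk.2)).sub
      (measurable_const.mul (hyMeas.comp
        (hXmeas n (pa k) (hpaLe k hk.1).1 (le_trans (hpaLe k hk.1).2 hk.2))))
  have hint : ∀ n : ℕ, Integrable (fun ω =>
      (∑ k ∈ Finset.Icc 1 (n + 1), (y (X k ω) - (p + q - 1) * y (X (pa k) ω)))
        - (n + 1 : ℝ) * (1 - (p + q - 1)) * c) μ := by
    intro n
    refine Integrable.sub ?_ (integrable_const _)
    refine integrable_finset_sum _ ?_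
    intro k hk
    simp only [Finset.mem_Icc] at hk
    exact (hyint _ (((hXmeas n k hk.1 hk.2)).mono (F.le n) le_rfl)).sub
      ((hyint _ (((hXmeas n (pa k) (hpaLe k hk.1).1
        (le_trans (hpaLe k hk.1).2 hk.2))).mono (F.le n) le_rfl)).const_mul _)
  refine martingale_nat hadp hint ?_
  intro n
  have hpa2 : pa (n + 2) = n / m + 1 := by simpa using hpa (n + 2) (by omega)
  have hpan1 : 1 ≤ pa (n + 2) := by rw [hpa2]; exact Nat.le_add_left 1 _
  have hpan : pa (n + 2) ≤ n + 1 := by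
    rw [hpa2]; exact Nat.succ_le_succ (Nat.div_le_self n m)
  have hXpam : Measurable[F n] (X (pa (n + 2))) := hXmeas n _ hpan1 hpan
  have hg1int : Integrable (fun ω => y (X (n + 2) ω)) μ :=
    hyint _ ((hadapted (n + 1)).mono (F.le _) le_rfl)
  have hg2sm : StronglyMeasurable[F n]
      (fun ω => (p + q - 1) * y (X (pa (n + 2)) ω) + (1 - (p + q - 1)) * c) :=
    ((measurable_const.mul (hyMeas.comp hXpam)).add measurable_const).stronglyMeasurable
  have hg2int : Integrable
      (fun ω => (p + q - 1) * y (X (pa (n + 2)) ω) + (1 - (p + q - 1)) * c) μ :=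
    ((hyint _ (hXpam.mono (F.le n) le_rfl)).const_mul _).add (integrable_const _)
  have h3 : μ[(fun ω => (p + q - 1) * y (X (pa (n + 2)) ω) + (1 - (p + q - 1)) * c) | F n]
      = fun ω => (p + q - 1) * y (X (pa (n + 2)) ω) + (1 - (p + q - 1)) * c :=
    condExp_of_stronglyMeasurable (F.le n) hg2sm hg2int
  have hDzero : μ[(fun ω => y (X (n + 2) ω))
      - (fun ω => (p + q - 1) * y (X (pa (n + 2)) ω) + (1 - (p + q - 1)) * c) | F n]
      =ᵐ[μ] 0 := by
    have h2 := condExp_sub (m := F n) hg1int hg2int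
    have h4 := hMarkov n y
    filter_upwards [h2, h4] with ω h2ω h4ω
    rw [Pi.zero_apply, h2ω, Pi.sub_apply, h3, h4ω, hkey (X (pa (n + 2)) ω)]
    ring
  have hfeq : (fun ω =>
      (∑ k ∈ Finset.Icc 1 (n + 1 + 1), (y (X k ω) - (p + q - 1) * y (X (pa k) ω)))
        - ((n + 1 : ℕ) + 1 : ℝ) * (1 - (p + q - 1)) * c)
      = (fun ω =>
          (∑ k ∈ Finset.Icc 1 (n + 1), (y (X k ω) - (p + q - 1) * y (X (pa k) ω)))
            - (n + 1 : ℝ) * (1 - (p + q - 1)) * c)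
        + ((fun ω => y (X (n + 2) ω))
          - (fun ω => (p + q - 1) * y (X (pa (n + 2)) ω) + (1 - (p + q - 1)) * c)) := by
    funext ω
    simp only [Pi.add_apply, Pi.sub_apply]
    rw [Finset.sum_Icc_succ_top (by omega)]
    push_cast
    ring
  have hadd := condExp_add (m := F n) (hint n) (hg1int.sub hg2int)
  refine EventuallyEq.symm ?_
  show μ[(fun ω =>
      (∑ k ∈ Finset.Icc 1 (n + 1 + 1), (y (X k ω) - (p + q - 1) * y (X (pa k) ω)))
        - ((n + 1 : ℕ) + 1 : ℝ) * (1 - (p + q - 1)) * c) | F n] =ᵐ[μ] _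
  rw [hfeq]
  refine hadd.trans ?_
  have h5 := condExp_of_stronglyMeasurable (F.le n) (hadp n) (hint n)
  rw [h5]
  filter_upwards [hDzero] with ω hω
  simp [hω]
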